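/- Modules over a promonad are presheaves on its Eilenberg–Moore category: let (T, μ, η) be a promonad on a category C. A left T-module (from the point) is a functor P : Cᵒᵖ ⥤ Type equipped with an action κ : T • P ⟹ P (where (T • P)(a) = ∫^b P(b) × T(a,b)) satisfying associativity with μ and unitality with η; morphisms are natural transformations commuting with the actions. Then the category of left T-modules is equivalent to the functor category T̃ᵒᵖ ⥤ Type, where T̃ is the Eilenberg–Moore category of T: a T-module P extends uniquely to a presheaf on T̃ with the action of T(a,b) given by κ, and conversely every presheaf on T̃ restricts along the canonical functor C ⥤ T̃ to a T-module. -/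

import Mathlib

open CategoryTheory Opposite

universe u

variable {B C D E : Type u} [SmallCategory B] [SmallCategory C] [SmallCategory D]
  [SmallCategory E]

/-- The balancing relation defining the coend `(G • F) (e, c) = ∫^d F (d, c) × G (e, d)`
computing the composition of the profunctors `F : C ↛ D` and `G : D ↛ E`. -/
def pCompRel (F : Dᵒᵖ × C ⥤ Type u) (G : Eᵒᵖ × D ⥤ Type u) (e : Eᵒᵖ) (c : C) :
    (Σ d : D, F.obj (op d, c) × G.obj (e, d)) →
      (Σ d : D, F.obj (op d, c) × G.obj (e, d)) → Prop :=
  fun X Y => ∃ (d d' : D) (k : d ⟶ d') (u : F.obj (op d', c)) (v : G.obj (e, d)),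
    X = ⟨d, (F.map ((k.op, 𝟙 c) : ((op d', c) : Dᵒᵖ × C) ⟶ (op d, c)) u, v)⟩ ∧
    Y = ⟨d', (u, G.map ((𝟙 e, k) : ((e, d) : Eᵒᵖ × D) ⟶ (e, d')) v)⟩

theorem pCompRel_mk_eq (F : Dᵒᵖ × C ⥤ Type u) (G : Eᵒᵖ × D ⥤ Type u) {e : Eᵒᵖ} {c : C}
    {d d' : D} (k : d ⟶ d') (u : F.obj (op d', c)) (v : G.obj (e, d)) :
    Quot.mk (pCompRel F G e c)
        ⟨d, (F.map ((k.op, 𝟙 c) : ((op d', c) : Dᵒᵖ × C) ⟶ (op d, c)) u, v)⟩ =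
      Quot.mk (pCompRel F G e c)
        ⟨d', (u, G.map ((𝟙 e, k) : ((e, d) : Eᵒᵖ × D) ⟶ (e, d')) v)⟩ :=
  Quot.sound ⟨d, d', k, u, v, rfl, rfl⟩

/-- The composition `G • F : C ↛ E` of profunctors `F : C ↛ D` and `G : D ↛ E`, defined
by the coend formula `(G • F) (e, c) = ∫^d F (d, c) × G (e, d)`. -/
def profComp (F : Dᵒᵖ × C ⥤ Type u) (G : Eᵒᵖ × D ⥤ Type u) : Eᵒᵖ × C ⥤ Type u where
  obj p := Quot (pCompRel F G p.1 p.2)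
  map {p q} φ := TypeCat.ofHom (Quot.lift
    (fun (X : Σ d : D, F.obj (op d, p.2) × G.obj (p.1, d)) => Quot.mk (pCompRel F G q.1 q.2)
      ⟨X.1, (F.map ((𝟙 (op X.1), φ.2) : ((op X.1, p.2) : Dᵒᵖ × C) ⟶ (op X.1, q.2)) X.2.1,
             G.map ((φ.1, 𝟙 X.1) : ((p.1, X.1) : Eᵒᵖ × D) ⟶ (q.1, X.1)) X.2.2)⟩)
    (by
      rintro _ _ ⟨d, d', k, u, v, rfl, rfl⟩
      dsimp only
      have h₁ : F.map ((𝟙 (op d), φ.2) : ((op d, p.2) : Dᵒᵖ × C) ⟶ (op d, q.2))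
            (F.map ((k.op, 𝟙 p.2) : ((op d', p.2) : Dᵒᵖ × C) ⟶ (op d, p.2)) u) =
          F.map ((k.op, 𝟙 q.2) : ((op d', q.2) : Dᵒᵖ × C) ⟶ (op d, q.2))
            (F.map ((𝟙 (op d'), φ.2) : ((op d', p.2) : Dᵒᵖ × C) ⟶ (op d', q.2)) u) := by
        rw [← FunctorToTypes.map_comp_apply, ← FunctorToTypes.map_comp_apply]
        refine congrArg (fun m => F.map m u) ?_
        apply CategoryTheory.Prod.hom_ext <;> simp
      have h₂ : G.map ((φ.1, 𝟙 d') : ((p.1, d') : Eᵒᵖ × D) ⟶ (q.1, d'))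
            (G.map ((𝟙 p.1, k) : ((p.1, d) : Eᵒᵖ × D) ⟶ (p.1, d')) v) =
          G.map ((𝟙 q.1, k) : ((q.1, d) : Eᵒᵖ × D) ⟶ (q.1, d'))
            (G.map ((φ.1, 𝟙 d) : ((p.1, d) : Eᵒᵖ × D) ⟶ (q.1, d)) v) := by
        rw [← FunctorToTypes.map_comp_apply, ← FunctorToTypes.map_comp_apply]
        refine congrArg (fun m => G.map m v) ?_
        apply CategoryTheory.Prod.hom_ext <;> simp
      rw [h₁, h₂]
      exact pCompRel_mk_eq F G k _ _))
  map_id p := by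
    obtain ⟨e, c⟩ := p
    ext X
    induction X using Quot.ind with
    | _ Y =>
      obtain ⟨d, u, v⟩ := Y
      show Quot.mk (pCompRel F G e c)
          ⟨d, (F.map ((𝟙 (op d), 𝟙 c) : ((op d, c) : Dᵒᵖ × C) ⟶ (op d, c)) u,
               G.map ((𝟙 e, 𝟙 d) : ((e, d) : Eᵒᵖ × D) ⟶ (e, d)) v)⟩ =
        Quot.mk (pCompRel F G e c) ⟨d, (u, v)⟩
      rw [show ((𝟙 (op d), 𝟙 c) : ((op d, c) : Dᵒᵖ × C) ⟶ (op d, c)) = 𝟙 (op d, c) from rfl,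
        show ((𝟙 e, 𝟙 d) : ((e, d) : Eᵒᵖ × D) ⟶ (e, d)) = 𝟙 (e, d) from rfl,
        FunctorToTypes.map_id_apply, FunctorToTypes.map_id_apply]
  map_comp {p q r} φ ψ := by
    ext X
    induction X using Quot.ind with
    | _ Y =>
    obtain ⟨d, u, v⟩ := Y
    show Quot.mk (pCompRel F G r.1 r.2)
        ⟨d, (F.map ((𝟙 (op d), φ.2 ≫ ψ.2) : ((op d, p.2) : Dᵒᵖ × C) ⟶ (op d, r.2)) u,
             G.map ((φ.1 ≫ ψ.1, 𝟙 d) : ((p.1, d) : Eᵒᵖ × D) ⟶ (r.1, d)) v)⟩ =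
      Quot.mk (pCompRel F G r.1 r.2)
        ⟨d, (F.map ((𝟙 (op d), ψ.2) : ((op d, q.2) : Dᵒᵖ × C) ⟶ (op d, r.2))
               (F.map ((𝟙 (op d), φ.2) : ((op d, p.2) : Dᵒᵖ × C) ⟶ (op d, q.2)) u),
             G.map ((ψ.1, 𝟙 d) : ((q.1, d) : Eᵒᵖ × D) ⟶ (r.1, d))
               (G.map ((φ.1, 𝟙 d) : ((p.1, d) : Eᵒᵖ × D) ⟶ (q.1, d)) v))⟩
    have h₁ : F.map ((𝟙 (op d), φ.2 ≫ ψ.2) : ((op d, p.2) : Dᵒᵖ × C) ⟶ (op d, r.2)) u =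
        F.map ((𝟙 (op d), ψ.2) : ((op d, q.2) : Dᵒᵖ × C) ⟶ (op d, r.2))
          (F.map ((𝟙 (op d), φ.2) : ((op d, p.2) : Dᵒᵖ × C) ⟶ (op d, q.2)) u) := by
      rw [← FunctorToTypes.map_comp_apply]
      refine congrArg (fun m => F.map m u) ?_
      apply CategoryTheory.Prod.hom_ext <;> simp
    have h₂ : G.map ((φ.1 ≫ ψ.1, 𝟙 d) : ((p.1, d) : Eᵒᵖ × D) ⟶ (r.1, d)) v =
        G.map ((ψ.1, 𝟙 d) : ((q.1, d) : Eᵒᵖ × D) ⟶ (r.1, d))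
          (G.map ((φ.1, 𝟙 d) : ((p.1, d) : Eᵒᵖ × D) ⟶ (q.1, d)) v) := by
      rw [← FunctorToTypes.map_comp_apply]
      refine congrArg (fun m => G.map m v) ?_
      apply CategoryTheory.Prod.hom_ext <;> simp
    rw [h₁, h₂]


variable (T : Cᵒᵖ × C ⥤ Type u)

/-- Composition in the Eilenberg–Moore category of a promonad `(T, μ, η)`, induced by
the multiplication `μ` via the coprojections of the coend
`(T • T) (a, c) = ∫^b T (a, b) × T (b, c)`. -/
def emComp (μ : profComp T T ⟶ T) {a b c : C}
    (f : T.obj (op a, b)) (g : T.obj (op b, c)) : T.obj (op a, c) :=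
  μ.app (op a, c) (Quot.mk (pCompRel T T (op a) c) ⟨b, (g, f)⟩)

/-- Identities in the Eilenberg–Moore category, given by the unit `η`. -/
def emId (η : Functor.hom C ⟶ T) (a : C) : T.obj (op a, a) :=
  η.app (op a, a) (𝟙 a)

/-- The axioms of a promonad `(T, μ, η)` on `C`: the multiplication `μ : T • T ⟶ T` is
associative and unital with respect to the unit `η : Hom_C ⟶ T`. -/
structure PromonadLaws (μ : profComp T T ⟶ T) (η : Functor.hom C ⟶ T) : Prop where
  assoc : ∀ {a b c d : C} (f : T.obj (op a, b)) (g : T.obj (op b, c))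
      (h : T.obj (op c, d)),
    emComp T μ (emComp T μ f g) h = emComp T μ f (emComp T μ g h)
  id_comp : ∀ {a b : C} (f : T.obj (op a, b)), emComp T μ (emId T η a) f = f
  comp_id : ∀ {a b : C} (f : T.obj (op a, b)), emComp T μ f (emId T η b) = f

/-- The Eilenberg–Moore category `T̃` of a promonad `T` on `C`: it has the same objects
as `C`. -/
def EMCat (T : Cᵒᵖ × C ⥤ Type u) : Type u := C

/-- The category structure on the Eilenberg–Moore category `T̃`: hom-sets
`T̃ (a, b) = T (a, b)`, composition induced by `μ`, identities `η (𝟙)`. -/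
def emCategory (μ : profComp T T ⟶ T) (η : Functor.hom C ⟶ T)
    (L : PromonadLaws T μ η) : Category.{u} (EMCat T) where
  Hom a b := T.obj (op a, b)
  id a := emId T η a
  comp f g := emComp T μ f g
  id_comp := L.id_comp
  comp_id := L.comp_id
  assoc := L.assoc

/-- A left `T`-module (from the point) over a promonad `(T, μ, η)`: a presheaf
`P : Cᵒᵖ ⥤ Type` equipped with an action `κ : T • P ⟶ P`, given via the coprojections
of the coend `(T • P) (a) = ∫^b P (b) × T (a, b)` by a balanced and natural family of
maps `P (b) → T (a, b) → P (a)`, associative for `μ` and unital for `η`. -/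
structure PModule (μ : profComp T T ⟶ T) (η : Functor.hom C ⟶ T) where
  P : Cᵒᵖ ⥤ Type u
  act : ∀ (a b : C), P.obj (op b) → T.obj (op a, b) → P.obj (op a)
  act_balanced : ∀ (a b b' : C) (k : b ⟶ b') (x : P.obj (op b')) (t : T.obj (op a, b)),
    act a b (P.map k.op x) t =
      act a b' x (T.map ((𝟙 (op a), k) : ((op a, b) : Cᵒᵖ × C) ⟶ (op a, b')) t)
  act_natural : ∀ (a a' b : C) (j : a' ⟶ a) (x : P.obj (op b)) (t : T.obj (op a, b)),
    P.map j.op (act a b x t) =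
      act a' b x (T.map ((j.op, 𝟙 b) : ((op a, b) : Cᵒᵖ × C) ⟶ (op a', b)) t)
  act_mul : ∀ (a b c : C) (x : P.obj (op c)) (g : T.obj (op b, c)) (f : T.obj (op a, b)),
    act a b (act b c x g) f = act a c x (emComp T μ f g)
  act_one : ∀ (a : C) (x : P.obj (op a)), act a a x (emId T η a) = x

/-- A morphism of left `T`-modules: a natural transformation of the underlying
presheaves commuting with the actions. -/
@[ext]
structure PModuleHom {μ : profComp T T ⟶ T} {η : Functor.hom C ⟶ T}
    (M N : PModule T μ η) where
  toNat : M.P ⟶ N.P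
  compat : ∀ (a b : C) (x : M.P.obj (op b)) (t : T.obj (op a, b)),
    toNat.app (op a) (M.act a b x t) = N.act a b (toNat.app (op b) x) t

/-- The category of left `T`-modules. -/
instance pModuleCategory (μ : profComp T T ⟶ T) (η : Functor.hom C ⟶ T) :
    Category (PModule T μ η) where
  Hom M N := PModuleHom T M N
  id M := ⟨𝟙 M.P, by intros; rfl⟩
  comp {M N O} f g := ⟨f.toNat ≫ g.toNat, by
    intro a b x t
    show g.toNat.app (op a) (f.toNat.app (op a) (M.act a b x t)) = _
    rw [f.compat, g.compat]
    rfl⟩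
  id_comp f := by apply PModuleHom.ext; simp
  comp_id f := by apply PModuleHom.ext; simp
  assoc f g h := by apply PModuleHom.ext; simp

/-- The type of presheaves on the Eilenberg–Moore category `T̃`. -/
def emPresheafType (μ : profComp T T ⟶ T) (η : Functor.hom C ⟶ T)
    (L : PromonadLaws T μ η) : Type (u + 1) := by
  letI : Category (EMCat T) := emCategory T μ η L
  exact (EMCat T)ᵒᵖ ⥤ Type u

/-- The category of presheaves on the Eilenberg–Moore category `T̃`. -/
def emPresheafCategory (μ : profComp T T ⟶ T) (η : Functor.hom C ⟶ T)
    (L : PromonadLaws T μ η) : Category.{max u u} (emPresheafType T μ η L) := by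
  letI : Category (EMCat T) := emCategory T μ η L
  exact (inferInstance : Category ((EMCat T)ᵒᵖ ⥤ Type u))

/-- Modules over a promonad are presheaves on its Eilenberg–Moore category: for a
promonad `(T, μ, η)` on `C`, the category of left `T`-modules is equivalent to the
functor category `T̃ᵒᵖ ⥤ Type`, where `T̃` is the Eilenberg–Moore category of `T`. -/
theorem eta_app_eq_left (η : Functor.hom C ⟶ T) {a b : C} (f : a ⟶ b) :
    η.app (op a, b) f =
      T.map ((𝟙 (op a), f) : ((op a, a) : Cᵒᵖ × C) ⟶ (op a, b)) (emId T η a) := by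
  have := NatTrans.naturality_apply η ((𝟙 (op a), f) : ((op a, a) : Cᵒᵖ × C) ⟶ (op a, b)) (𝟙 a)
  dsimp [Functor.hom, emId] at this ⊢
  refine Eq.trans ?_ this
  congr 1
  show f = 𝟙 a ≫ 𝟙 a ≫ f
  simp

theorem eta_app_eq_right (η : Functor.hom C ⟶ T) {b c : C} (g : b ⟶ c) :
    η.app (op b, c) g =
      T.map ((g.op, 𝟙 c) : ((op c, c) : Cᵒᵖ × C) ⟶ (op b, c)) (emId T η c) := by
  have := NatTrans.naturality_apply η ((g.op, 𝟙 c) : ((op c, c) : Cᵒᵖ × C) ⟶ (op b, c)) (𝟙 c)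
  dsimp [Functor.hom, emId] at this ⊢
  refine Eq.trans ?_ this
  congr 1
  show g = g ≫ 𝟙 c ≫ 𝟙 c
  simp

theorem emComp_eta_left (μ : profComp T T ⟶ T) (η : Functor.hom C ⟶ T)
    (L : PromonadLaws T μ η) {a b c : C} (f : a ⟶ b) (t : T.obj (op b, c)) :
    emComp T μ (η.app (op a, b) f) t =
      T.map ((f.op, 𝟙 c) : ((op b, c) : Cᵒᵖ × C) ⟶ (op a, c)) t := by
  show μ.app (op a, c) (Quot.mk (pCompRel T T (op a) c) ⟨b, (t, η.app (op a, b) f)⟩) = _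
  rw [eta_app_eq_left T η f, ← pCompRel_mk_eq T T f t (emId T η a)]
  exact L.id_comp _

theorem emComp_eta_right (μ : profComp T T ⟶ T) (η : Functor.hom C ⟶ T)
    (L : PromonadLaws T μ η) {a b c : C} (g : b ⟶ c) (t : T.obj (op a, b)) :
    emComp T μ t (η.app (op b, c) g) =
      T.map ((𝟙 (op a), g) : ((op a, b) : Cᵒᵖ × C) ⟶ (op a, c)) t := by
  show μ.app (op a, c) (Quot.mk (pCompRel T T (op a) c) ⟨b, (η.app (op b, c) g, t)⟩) = _
  rw [eta_app_eq_right T η g, pCompRel_mk_eq T T g (emId T η c) t]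
  exact L.comp_id _

theorem eta_comp (μ : profComp T T ⟶ T) (η : Functor.hom C ⟶ T)
    (L : PromonadLaws T μ η) {a b c : C} (f : a ⟶ b) (g : b ⟶ c) :
    η.app (op a, c) (f ≫ g) =
      emComp T μ (η.app (op a, b) f) (η.app (op b, c) g) := by
  rw [emComp_eta_left T μ η L f]
  have := NatTrans.naturality_apply η ((f.op, 𝟙 c) : ((op b, c) : Cᵒᵖ × C) ⟶ (op a, c)) g
  dsimp [Functor.hom] at this
  refine Eq.trans ?_ this
  congr 1
  show f ≫ g = f ≫ g ≫ 𝟙 c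
  simp

theorem act_eta (μ : profComp T T ⟶ T) (η : Functor.hom C ⟶ T)
    (M : PModule T μ η) {a' a : C} (j : a' ⟶ a) (x : M.P.obj (op a)) :
    M.act a' a x (η.app (op a', a) j) = M.P.map j.op x := by
  rw [eta_app_eq_left T η j, ← M.act_balanced, M.act_one]


/-- The coprojection of a hom of `C`-shape into the opposite Eilenberg–Moore category,
with all category instances explicit. -/
def emOpHom (μ : profComp T T ⟶ T) (η : Functor.hom C ⟶ T) (L : PromonadLaws T μ η)
    {a b : C} (t : T.obj (op a, b)) :
    @Quiver.Hom (EMCat T)ᵒᵖ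
      (@CategoryStruct.toQuiver (EMCat T)ᵒᵖ (@Category.toCategoryStruct (EMCat T)ᵒᵖ
        (@Category.opposite (EMCat T) (emCategory T μ η L)))) (op b) (op a) :=
  Opposite.op t

/-- Modules over a promonad are presheaves on its Eilenberg–Moore category: for a
promonad `(T, μ, η)` on `C`, the category of left `T`-modules is equivalent to the
functor category `T̃ᵒᵖ ⥤ Type`, where `T̃` is the Eilenberg–Moore category of `T`. -/
theorem stmt_14 (μ : profComp T T ⟶ T) (η : Functor.hom C ⟶ T)
    (L : PromonadLaws T μ η) :
    Nonempty (@CategoryTheory.Equivalence (PModule T μ η) (emPresheafType T μ η L)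
      (pModuleCategory T μ η) (emPresheafCategory T μ η L)) := by
  letI : Category (EMCat T) := emCategory T μ η L
  letI : Category (emPresheafType T μ η L) := emPresheafCategory T μ η L
  -- the functor from modules to presheaves on the Eilenberg-Moore category
  let Fobj : PModule T μ η → ((EMCat T)ᵒᵖ ⥤ Type u) := fun M =>
    { obj := fun X => M.P.obj (op X.unop)
      map := fun {X Y} h => TypeCat.ofHom fun x => M.act Y.unop X.unop x h.unop
      map_id := fun X => by ext x; exact M.act_one X.unop x
      map_comp := fun {X Y Z} h h' => by ext x; exact
        (M.act_mul Z.unop Y.unop X.unop x h.unop h'.unop).symm }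
  let F : PModule T μ η ⥤ ((EMCat T)ᵒᵖ ⥤ Type u) :=
    { obj := Fobj
      map := fun {M N} φ =>
        { app := fun X => φ.toNat.app (op X.unop)
          naturality := fun X Y h => by ext x; exact φ.compat Y.unop X.unop x h.unop }
      map_id := fun M => rfl
      map_comp := fun φ ψ => rfl }
  -- the functor from presheaves to modules
  let Gobj : ((EMCat T)ᵒᵖ ⥤ Type u) → PModule T μ η := fun P =>
    { P :=
        { obj := fun X => P.obj (op X.unop)
          map := fun {X Y} j => TypeCat.ofHom fun x =>
            P.map (emOpHom T μ η L (η.app (op Y.unop, X.unop) j.unop)) x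
          map_id := fun X => by ext x; exact
            FunctorToTypes.map_id_apply P x
          map_comp := fun {X Y Z} j j' => by
            ext x
            exact (congrArg (fun m => P.map m x) (congrArg (emOpHom T μ η L)
                (eta_comp T μ η L j'.unop j.unop))).trans
              (FunctorToTypes.map_comp_apply P
                (emOpHom T μ η L (η.app (op Y.unop, X.unop) j.unop))
                (emOpHom T μ η L (η.app (op Z.unop, Y.unop) j'.unop)) x) }
      act := fun a b x t => P.map (emOpHom T μ η L t) x
      act_balanced := fun a b b' k x t => by
        show P.map (emOpHom T μ η L t)
            (P.map (emOpHom T μ η L (η.app (op b, b') k)) x) = _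
        rw [← FunctorToTypes.map_comp_apply]
        exact congrArg (fun m => P.map m x) (congrArg (emOpHom T μ η L)
          (emComp_eta_right T μ η L k t))
      act_natural := fun a a' b j x t => by
        show P.map (emOpHom T μ η L (η.app (op a', a) j))
            (P.map (emOpHom T μ η L t) x) = _
        rw [← FunctorToTypes.map_comp_apply]
        exact congrArg (fun m => P.map m x) (congrArg (emOpHom T μ η L)
          (emComp_eta_left T μ η L j t))
      act_mul := fun a b c x g f => by
        show P.map (emOpHom T μ η L f) (P.map (emOpHom T μ η L g) x) = _
        rw [← FunctorToTypes.map_comp_apply]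
        rfl
      act_one := fun a x => FunctorToTypes.map_id_apply P x }
  let G : ((EMCat T)ᵒᵖ ⥤ Type u) ⥤ PModule T μ η :=
    { obj := Gobj
      map := fun {P Q} α =>
        { toNat :=
            { app := fun X => α.app (op X.unop)
              naturality := by
                intro X Y j
                ext x
                exact NatTrans.naturality_apply α
                  (emOpHom T μ η L (η.app (op Y.unop, X.unop) j.unop)) x }
          compat := fun a b x t =>
            NatTrans.naturality_apply α (emOpHom T μ η L t) x }
      map_id := fun P => rfl
      map_comp := fun α β => rfl }
  -- unit isomorphism
  have unit_nat : ∀ (M : PModule T μ η) {X Y : Cᵒᵖ} (j : X ⟶ Y)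
      (x : M.P.obj X), (Gobj (Fobj M)).P.map j x = M.P.map j x :=
    fun M {X Y} j x => act_eta T μ η M j.unop x
  let unitHom : ∀ M : PModule T μ η, M ⟶ G.obj (F.obj M) := fun M =>
    { toNat :=
        { app := fun X => TypeCat.ofHom fun x => x
          naturality := fun X Y j => by ext x; exact (unit_nat M j x).symm }
      compat := fun a b x t => rfl }
  let unitInv : ∀ M : PModule T μ η, G.obj (F.obj M) ⟶ M := fun M =>
    { toNat :=
        { app := fun X => TypeCat.ofHom fun x => x
          naturality := fun X Y j => by ext x; exact unit_nat M j x }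
      compat := fun a b x t => rfl }
  -- counit isomorphism
  let counitHom : ∀ P : (EMCat T)ᵒᵖ ⥤ Type u, Fobj (Gobj P) ⟶ P := fun P =>
    { app := fun X => TypeCat.ofHom fun x => x
      naturality := fun X Y h => rfl }
  let counitInv : ∀ P : (EMCat T)ᵒᵖ ⥤ Type u, P ⟶ Fobj (Gobj P) := fun P =>
    { app := fun X => TypeCat.ofHom fun x => x
      naturality := fun X Y h => rfl }
  refine ⟨CategoryTheory.Equivalence.mk F G ?_ ?_⟩
  · exact NatIso.ofComponents
      (fun M =>
        { hom := unitHom M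
          inv := unitInv M
          hom_inv_id := by apply PModuleHom.ext; rfl
          inv_hom_id := by apply PModuleHom.ext; rfl })
      (fun {M N} φ => by apply PModuleHom.ext; rfl)
  · exact NatIso.ofComponents
      (fun P =>
        { hom := counitHom P
          inv := counitInv P
          hom_inv_id := rfl
          inv_hom_id := rfl })
      (fun {P Q} α => rfl)
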